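/- For all integers h ≥ 1 and rational x, the coefficient of z^0 through z^h in the formal power series expansion of P_h(x, -z)/Q_h(x, -z) equals C(x+n, n) for 0 ≤ n ≤ h, where P_h(x,z) = Σ_{n=0}^{h-1} C(x+n-h, n)·C(h-1,n)/C(2h-1,n)·(-z)^n and Q_h(x,z) = Σ_{i=0}^{h} C(x+h,i)·(h!/(h-i)!)·((2h-1-i)!/(2h-1)!)·z^i. -/

import Mathlib

/-- Generalized binomial coefficient `C(x, k) = x(x-1)⋯(x-k+1)/k!` for rational `x`. -/
noncomputable def gchoose (x : ℚ) (k : ℕ) : ℚ :=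
  (∏ i ∈ Finset.range k, (x - i)) / (Nat.factorial k)

/-- The formal power series `P_h(x, -z)`, where
`P_h(x, z) = Σ_{n=0}^{h-1} C(x+n-h, n) C(h-1, n) / C(2h-1, n) (-z)^n`. -/
noncomputable def Pser (x : ℚ) (h : ℕ) : PowerSeries ℚ :=
  PowerSeries.mk fun n =>
    if n < h then gchoose (x + n - h) n * gchoose ((h : ℚ) - 1) n / gchoose (2 * (h : ℚ) - 1) n
    else 0

/-- The formal power series `Q_h(x, -z)`, where
`Q_h(x, z) = Σ_{i=0}^{h} C(x+h, i) (h!/(h-i)!) ((2h-1-i)!/(2h-1)!) z^i`. -/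
noncomputable def Qser (x : ℚ) (h : ℕ) : PowerSeries ℚ :=
  PowerSeries.mk fun i =>
    if i ≤ h then
      (-1 : ℚ) ^ i * gchoose (x + h) i * ((Nat.factorial h : ℚ) / (Nat.factorial (h - i) : ℚ)) *
        ((Nat.factorial (2 * h - 1 - i) : ℚ) / (Nat.factorial (2 * h - 1) : ℚ))
    else 0

lemma gchoose_zero (x : ℚ) : gchoose x 0 = 1 := by simp [gchoose]

lemma gchoose_succ (x : ℚ) (k : ℕ) :
    gchoose x (k+1) = gchoose x k * (x - k) / (k+1) := by
  rw [gchoose, gchoose, Finset.prod_range_succ, Nat.factorial_succ]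
  push_cast
  rw [div_mul_eq_mul_div, div_div, mul_comm ((k:ℚ)+1)]

lemma gchoose_succ' (x : ℚ) (k : ℕ) :
    ((k:ℚ)+1) * gchoose (x+1) (k+1) = (x+1) * gchoose x k := by
  have h1 : (Nat.factorial k : ℚ) ≠ 0 := by positivity
  have h2 : ((k:ℚ)+1) ≠ 0 := by positivity
  rw [gchoose, gchoose, Finset.prod_range_succ', Nat.factorial_succ]
  push_cast
  have : ∀ j ∈ Finset.range k, x + 1 - ((j:ℚ)+1) = x - j := by intro j _; ring
  rw [Finset.prod_congr rfl this]
  field_simp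
  ring

lemma gchoose_pos (x : ℚ) (k : ℕ) (hx : ∀ j < k, 0 < x - j) : 0 < gchoose x k := by
  apply div_pos
  · exact Finset.prod_pos (fun j hj => hx j (Finset.mem_range.mp hj))
  · positivity

/-- The `i`-th coefficient of `Qser`. -/
noncomputable def qc (x : ℚ) (h i : ℕ) : ℚ :=
  (-1 : ℚ) ^ i * gchoose (x + h) i * ((Nat.factorial h : ℚ) / (Nat.factorial (h - i) : ℚ)) *
    ((Nat.factorial (2 * h - 1 - i) : ℚ) / (Nat.factorial (2 * h - 1) : ℚ))

/-- Summand of the convolution. -/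
noncomputable def trm (x : ℚ) (h n i : ℕ) : ℚ :=
  qc x h i * gchoose (x + ((n - i : ℕ) : ℚ)) (n - i)

/-- The convolution sum. -/
noncomputable def Sf (x : ℚ) (h n : ℕ) : ℚ := ∑ i ∈ Finset.range (n+1), trm x h n i

lemma qc_succ (x : ℚ) (h i : ℕ) (hi : i + 1 ≤ h) :
    qc x h (i+1) * ((((i:ℚ))+1) * (2*(h:ℚ)-1-i)) = qc x h i * (-(x+(h:ℚ)-i)) * ((h:ℚ)-i) := by
  obtain ⟨m, hm⟩ : ∃ m, h - i = m + 1 := ⟨h - i - 1, by omega⟩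
  obtain ⟨l, hl⟩ : ∃ l, 2*h - 1 - i = l + 1 := ⟨2*h - 1 - i - 1, by omega⟩
  have hm2 : h - (i+1) = m := by omega
  have hl2 : 2*h - 1 - (i+1) = l := by omega
  have hmc : ((m:ℚ)+1) = (h:ℚ) - i := by
    have : ((h - i : ℕ) : ℚ) = (h:ℚ) - i := by push_cast [Nat.cast_sub (by omega : i ≤ h)]; ring
    rw [← this, hm]; push_cast; ring
  have hlc : ((l:ℚ)+1) = 2*(h:ℚ) - 1 - i := by
    have : ((2*h - 1 - i : ℕ) : ℚ) = 2*(h:ℚ) - 1 - i := by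
      push_cast [Nat.cast_sub (by omega : i ≤ 2*h-1), Nat.cast_sub (by omega : 1 ≤ 2*h)]; ring
    rw [← this, hl]; push_cast; ring
  rw [qc, qc, hm, hl, hm2, hl2, gchoose_succ, Nat.factorial_succ, Nat.factorial_succ]
  have f1 : (Nat.factorial m : ℚ) ≠ 0 := by positivity
  have f2 : (Nat.factorial l : ℚ) ≠ 0 := by positivity
  have f3 : (Nat.factorial (2*h-1) : ℚ) ≠ 0 := by positivity
  have f4 : ((i:ℚ)+1) ≠ 0 := by positivity
  have f5 : ((m:ℚ)+1) ≠ 0 := by positivity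
  have f6 : ((l:ℚ)+1) ≠ 0 := by positivity
  push_cast
  rw [← hmc, ← hlc]
  field_simp
  ring

lemma step (x : ℚ) (h n i : ℕ) (hi : i ≤ n) (hnh : n + 1 ≤ h) :
    ((n:ℚ)+1)*(2*(h:ℚ)-1-n) * trm x h (n+1) i - (x+(n:ℚ)+1-h)*((h:ℚ)-1-n) * trm x h n i
    = trm x h (n+1) (i+1) * ((((i:ℚ))+1) * ((((i:ℚ))+1)-2*h))
      - trm x h (n+1) i * ((i:ℚ) * ((i:ℚ)-2*h)) := by
  set k := n - i with hk
  have hkc : ((k:ℕ):ℚ) = (n:ℚ) - i := by rw [hk]; push_cast [Nat.cast_sub hi]; ring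
  have e1 : n + 1 - i = k + 1 := by omega
  have e2 : n + 1 - (i+1) = k := by omega
  have g1 : gchoose (x + ((k+1 : ℕ) : ℚ)) (k+1)
      = (x + (k:ℚ) + 1) * gchoose (x + (k:ℚ)) k / ((k:ℚ)+1) := by
    have := gchoose_succ' (x + (k:ℚ)) k
    have hkk : ((k:ℚ)+1) ≠ 0 := by positivity
    push_cast
    rw [show x + ((k:ℚ)+1) = (x + (k:ℚ)) + 1 by ring]
    field_simp at this ⊢
    linarith [this]
  have hq : qc x h (i+1) = qc x h i * (-(x+(h:ℚ)-i)) * ((h:ℚ)-i) / ((((i:ℚ))+1) * (2*(h:ℚ)-1-i)) := by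
    have h4 : ((i:ℚ)+1) ≠ 0 := by positivity
    have h5 : (2*(h:ℚ)-1-i) ≠ 0 := by
      have : (i:ℚ) + 1 ≤ h := by exact_mod_cast Nat.cast_le.mpr (by omega : i+1 ≤ h)
      have hh1 : (1:ℚ) ≤ h := by exact_mod_cast Nat.one_le_cast.mpr (by omega : 1 ≤ h)
      nlinarith
    rw [eq_div_iff (by exact mul_ne_zero h4 h5)]
    exact qc_succ x h i (by omega)
  simp only [trm]
  rw [e1, e2, g1, hq, hk]
  rw [hkc]
  have d1 : ((n:ℚ) - i) + 1 ≠ 0 := by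
    have : (i:ℚ) ≤ n := by exact_mod_cast hi
    linarith
  have d2 : ((i:ℚ)+1) ≠ 0 := by positivity
  have d3 : (2*(h:ℚ)-1-i) ≠ 0 := by
    have h6 : (i:ℚ) + 1 ≤ h := by exact_mod_cast Nat.cast_le.mpr (by omega : i+1 ≤ h)
    have hh1 : (1:ℚ) ≤ h := by exact_mod_cast Nat.one_le_cast.mpr (by omega : 1 ≤ h)
    nlinarith
  field_simp
  ring

lemma recurr (x : ℚ) (h n : ℕ) (hnh : n + 1 ≤ h) :
    ((n:ℚ)+1)*(2*(h:ℚ)-1-n) * Sf x h (n+1)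
      = (x+(n:ℚ)+1-h)*((h:ℚ)-1-n) * Sf x h n := by
  have hsum : ∑ i ∈ Finset.range (n+1),
      (((n:ℚ)+1)*(2*(h:ℚ)-1-n) * trm x h (n+1) i - (x+(n:ℚ)+1-h)*((h:ℚ)-1-n) * trm x h n i)
      = ∑ i ∈ Finset.range (n+1),
        (trm x h (n+1) (i+1) * ((((i:ℚ))+1) * ((((i:ℚ))+1)-2*h))
          - trm x h (n+1) i * ((i:ℚ) * ((i:ℚ)-2*h))) := by
    apply Finset.sum_congr rfl
    intro i hi
    exact step x h n i (Nat.lt_succ_iff.mp (Finset.mem_range.mp hi)) hnh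
  have htel := Finset.sum_range_sub (fun i => trm x h (n+1) i * ((i:ℚ) * ((i:ℚ)-2*h))) (n+1)
  simp only [Nat.cast_add, Nat.cast_one, Nat.cast_zero] at htel
  have e : ((n:ℚ)+1)*(2*(h:ℚ)-1-n) * Sf x h (n+1) - (x+(n:ℚ)+1-h)*((h:ℚ)-1-n) * Sf x h n
      = (∑ i ∈ Finset.range (n+1),
          (((n:ℚ)+1)*(2*(h:ℚ)-1-n) * trm x h (n+1) i - (x+(n:ℚ)+1-h)*((h:ℚ)-1-n) * trm x h n i))
        + ((n:ℚ)+1)*(2*(h:ℚ)-1-n) * trm x h (n+1) (n+1) := by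
    rw [Sf, Sf, Finset.sum_range_succ, Finset.sum_sub_distrib, ← Finset.mul_sum, ← Finset.mul_sum]
    ring
  have key : ((n:ℚ)+1)*(2*(h:ℚ)-1-n) * Sf x h (n+1) - (x+(n:ℚ)+1-h)*((h:ℚ)-1-n) * Sf x h n = 0 := by
    rw [e, hsum, htel]
    ring
  linarith

lemma qc_zero (x : ℚ) (h : ℕ) : qc x h 0 = 1 := by
  have f1 : (Nat.factorial h : ℚ) ≠ 0 := by positivity
  have f2 : (Nat.factorial (2*h-1) : ℚ) ≠ 0 := by positivity
  simp [qc, gchoose_zero, div_self, f1, f2]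

lemma closed (x : ℚ) (h : ℕ) (hh : 1 ≤ h) :
    ∀ n, n ≤ h → Sf x h n
      = gchoose (x + n - h) n * gchoose ((h:ℚ) - 1) n / gchoose (2 * (h:ℚ) - 1) n := by
  intro n
  induction n with
  | zero =>
    intro _
    simp [Sf, trm, qc_zero, gchoose_zero]
  | succ n ih =>
    intro hn1
    have hn : n ≤ h := by omega
    have hnc : (n:ℚ) + 1 ≤ h := by exact_mod_cast Nat.cast_le.mpr hn1
    have hhc : (1:ℚ) ≤ h := by exact_mod_cast Nat.one_le_cast.mpr hh
    have hc1 : ((n:ℚ)+1) ≠ 0 := by positivity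
    have hc2 : (2*(h:ℚ)-1-n) ≠ 0 := by nlinarith
    have hq_n : gchoose (2*(h:ℚ)-1) n ≠ 0 := by
      refine ne_of_gt (gchoose_pos _ _ ?_)
      intro j hj
      have : (j:ℚ) < (n:ℚ) := by exact_mod_cast hj
      linarith
    have hq_n1 : gchoose (2*(h:ℚ)-1) (n+1) ≠ 0 := by
      refine ne_of_gt (gchoose_pos _ _ ?_)
      intro j hj
      have : (j:ℚ) < (n:ℚ) + 1 := by exact_mod_cast hj
      linarith
    have hrec := recurr x h n hn1
    rw [ih hn] at hrec
    have r1 : gchoose (x + ((n:ℕ)+1:ℕ) - h) (n+1)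
        = (x + (n:ℚ) - h + 1) * gchoose (x + (n:ℚ) - h) n / ((n:ℚ)+1) := by
      have := gchoose_succ' (x + (n:ℚ) - h) n
      rw [eq_div_iff hc1]
      push_cast
      rw [show x + ((n:ℚ)+1) - h = (x + (n:ℚ) - h) + 1 by ring]
      linarith [this]
    have r2 : gchoose ((h:ℚ)-1) (n+1) = gchoose ((h:ℚ)-1) n * ((h:ℚ)-1-n)/((n:ℚ)+1) :=
      gchoose_succ _ n
    have r3 : gchoose (2*(h:ℚ)-1) (n+1) = gchoose (2*(h:ℚ)-1) n * (2*(h:ℚ)-1-n)/((n:ℚ)+1) :=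
      gchoose_succ _ n
    have hSf : Sf x h (n+1)
        = (x+(n:ℚ)+1-h)*((h:ℚ)-1-n)
            * (gchoose (x + n - h) n * gchoose ((h:ℚ) - 1) n / gchoose (2 * (h:ℚ) - 1) n)
          / (((n:ℚ)+1)*(2*(h:ℚ)-1-n)) := by
      rw [eq_div_iff (mul_ne_zero hc1 hc2)]
      linarith [hrec]
    rw [hSf, r1, r2, r3]
    field_simp
    ring

lemma gchoose_hm1 (h : ℕ) (hh : 1 ≤ h) : gchoose ((h:ℚ) - 1) h = 0 := by
  rw [gchoose]
  rw [Finset.prod_eq_zero (Finset.mem_range.mpr (by omega : h - 1 < h))]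
  · simp
  · push_cast [Nat.cast_sub hh]
    ring

lemma coeffP (x : ℚ) (h n : ℕ) (hh : 1 ≤ h) (hn : n ≤ h) :
    PowerSeries.coeff n (Pser x h) = Sf x h n := by
  rw [Pser, PowerSeries.coeff_mk, closed x h hh n hn]
  by_cases hcase : n < h
  · rw [if_pos hcase]
  · rw [if_neg hcase]
    have : n = h := by omega
    subst this
    rw [gchoose_hm1 n hh]
    ring

lemma coeffQB (x : ℚ) (h n : ℕ) (hn : n ≤ h) :
    PowerSeries.coeff n (Qser x h * PowerSeries.mk (fun m => gchoose (x + m) m))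
      = Sf x h n := by
  rw [PowerSeries.coeff_mul, Finset.Nat.sum_antidiagonal_eq_sum_range_succ_mk, Sf]
  apply Finset.sum_congr rfl
  intro i hi
  have hi' : i ≤ h := le_trans (Nat.lt_succ_iff.mp (Finset.mem_range.mp hi)) hn
  rw [Qser, PowerSeries.coeff_mk, PowerSeries.coeff_mk, if_pos hi', trm, qc]

theorem stmt12 (h : ℕ) (hh : 1 ≤ h) (x : ℚ) (n : ℕ) (hn : n ≤ h) :
    PowerSeries.coeff n (Pser x h * (Qser x h)⁻¹) = gchoose (x + n) n := by
  set B : PowerSeries ℚ := PowerSeries.mk (fun m => gchoose (x + m) m) with hB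
  have hQ0 : PowerSeries.constantCoeff (Qser x h) ≠ 0 := by
    have : PowerSeries.constantCoeff (Qser x h) = qc x h 0 := by
      rw [Qser, ← PowerSeries.coeff_zero_eq_constantCoeff_apply, PowerSeries.coeff_mk,
        if_pos (Nat.zero_le h), qc]
    rw [this, qc_zero]
    exact one_ne_zero
  have hQQ : Qser x h * (Qser x h)⁻¹ = 1 := PowerSeries.mul_inv_cancel _ hQ0
  have hrepr : Pser x h * (Qser x h)⁻¹
      = B + (Pser x h - Qser x h * B) * (Qser x h)⁻¹ := by
    linear_combination B * hQQ
  rw [hrepr, map_add]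
  have hzero : PowerSeries.coeff n ((Pser x h - Qser x h * B) * (Qser x h)⁻¹) = 0 := by
    rw [PowerSeries.coeff_mul]
    apply Finset.sum_eq_zero
    intro p hp
    have hp1 : p.1 ≤ n := by
      have := Finset.HasAntidiagonal.mem_antidiagonal.mp hp
      omega
    have : PowerSeries.coeff p.1 (Pser x h - Qser x h * B) = 0 := by
      rw [map_sub, coeffP x h p.1 hh (le_trans hp1 hn), hB, coeffQB x h p.1 (le_trans hp1 hn),
        sub_self]
    rw [this, zero_mul]
  rw [hzero, add_zero, hB, PowerSeries.coeff_mk]
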